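/- In a presheaf category Set^(A^op), for morphisms g : Z → Y and f : Y → X, the pushforward Π_f Z exists and its value at an object a of A is naturally isomorphic to the coproduct over all σ : y(a) → X of the set of morphisms over Y from the pullback of Y along σ to Z, where y(a) is the representable presheaf at a. -/

import Mathlib

open CategoryTheory Limits Opposite

universe u

namespace PiFormulaAux

variable {A : Type u} [SmallCategory A]

section PbPair

variable {F G H : Aᵒᵖ ⥤ Type u} (φ : F ⟶ H) (ψ : G ⟶ H)

/-- The element of the pullback presheaf determined by a compatible pair of elements. -/
noncomputable def pbPair {c : Aᵒᵖ} (x : F.obj c) (y : G.obj c)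
    (h : φ.app c x = ψ.app c y) : (pullback φ ψ).obj c :=
  yonedaEquiv (pullback.lift (yonedaEquiv.symm x) (yonedaEquiv.symm y)
    (by rw [yonedaEquiv_symm_naturality_right, yonedaEquiv_symm_naturality_right, h]))

@[simp] lemma pbPair_fst {c : Aᵒᵖ} (x : F.obj c) (y : G.obj c)
    (h : φ.app c x = ψ.app c y) :
    (pullback.fst φ ψ).app c (pbPair φ ψ x y h) = x := by
  rw [pbPair, ← yonedaEquiv_comp, pullback.lift_fst, Equiv.apply_symm_apply]

@[simp] lemma pbPair_snd {c : Aᵒᵖ} (x : F.obj c) (y : G.obj c)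
    (h : φ.app c x = ψ.app c y) :
    (pullback.snd φ ψ).app c (pbPair φ ψ x y h) = y := by
  rw [pbPair, ← yonedaEquiv_comp, pullback.lift_snd, Equiv.apply_symm_apply]

lemma pb_ext {c : Aᵒᵖ} {u v : (pullback φ ψ).obj c}
    (h1 : (pullback.fst φ ψ).app c u = (pullback.fst φ ψ).app c v)
    (h2 : (pullback.snd φ ψ).app c u = (pullback.snd φ ψ).app c v) : u = v := by
  have : (yonedaEquiv.symm u : yoneda.obj c.unop ⟶ pullback φ ψ) = yonedaEquiv.symm v := by
    apply pullback.hom_ext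
    · rw [yonedaEquiv_symm_naturality_right, yonedaEquiv_symm_naturality_right, h1]
    · rw [yonedaEquiv_symm_naturality_right, yonedaEquiv_symm_naturality_right, h2]
  exact yonedaEquiv.symm.injective this

lemma pbPair_congr {c : Aᵒᵖ} {x x' : F.obj c} {y y' : G.obj c} (hx : x = x') (hy : y = y')
    (h : φ.app c x = ψ.app c y) :
    pbPair φ ψ x y h = pbPair φ ψ x' y' (by rw [← hx, ← hy]; exact h) := by
  subst hx; subst hy; rfl

lemma pb_map {c c' : Aᵒᵖ} (k : c ⟶ c') (x : F.obj c) (y : G.obj c)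
    (h : φ.app c x = ψ.app c y) :
    (pullback φ ψ).map k (pbPair φ ψ x y h) =
      pbPair φ ψ (F.map k x) (G.map k y)
        (by rw [FunctorToTypes.naturality, FunctorToTypes.naturality, h]) := by
  apply pb_ext
  · rw [FunctorToTypes.naturality, pbPair_fst, pbPair_fst]
  · rw [FunctorToTypes.naturality, pbPair_snd, pbPair_snd]

end PbPair
section Pi

variable {X Y : Aᵒᵖ ⥤ Type u} (f : Y ⟶ X) (V : Over Y)

/-- An element of the pushforward presheaf `Π_f V` at `b`. -/
structure PiElt (b : Aᵒᵖ) : Type u where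
  base : X.obj b
  sec : ∀ (c : Aᵒᵖ) (h : b ⟶ c) (v : Y.obj c), f.app c v = X.map h base → V.left.obj c
  overEq : ∀ c h v hv, V.hom.app c (sec c h v hv) = v
  natur : ∀ (c c' : Aᵒᵖ) (h : b ⟶ c) (k : c ⟶ c') (v : Y.obj c)
      (hv : f.app c v = X.map h base),
    V.left.map k (sec c h v hv) = sec c' (h ≫ k) (Y.map k v)
      (by rw [FunctorToTypes.naturality, hv, FunctorToTypes.map_comp_apply])

variable {f V}

lemma PiElt.sec_congr {b c : Aᵒᵖ} {x y : PiElt f V b} (exy : x = y) {h h' : b ⟶ c}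
    (eh : h = h') {v v' : Y.obj c} (ev : v = v') (hv : f.app c v = X.map h x.base) :
    x.sec c h v hv = y.sec c h' v' (by rw [← exy, ← eh, ← ev]; exact hv) := by
  subst exy; subst eh; subst ev; rfl

lemma PiElt.ext' {b : Aᵒᵖ} {x y : PiElt f V b} (h1 : x.base = y.base)
    (h2 : ∀ c h v hv hv', x.sec c h v hv = y.sec c h v hv') : x = y := by
  obtain ⟨b1, s1, o1, n1⟩ := x
  obtain ⟨b2, s2, o2, n2⟩ := y
  dsimp at h1 h2
  subst h1
  have : s1 = s2 := by
    funext c h v hv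
    exact h2 c h v hv hv
  subst this
  rfl

variable (f V)

/-- The pushforward presheaf. -/
def PiObj : Aᵒᵖ ⥤ Type u where
  obj b := PiElt f V b
  map {b b'} h := TypeCat.ofHom fun x =>
    { base := X.map h x.base
      sec := fun c k v hv =>
        x.sec c (h ≫ k) v (by rw [hv, FunctorToTypes.map_comp_apply])
      overEq := fun c k v hv => x.overEq _ _ _ _
      natur := fun c c' k k' v hv => by
        rw [x.natur]
        exact PiElt.sec_congr rfl (Category.assoc _ _ _) rfl _ }
  map_id b := by
    refine ConcreteCategory.hom_ext _ _ fun x => ?_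
    apply PiElt.ext'
    · show X.map (𝟙 b) x.base = x.base
      simp
    · intro c h v hv hv'
      exact PiElt.sec_congr rfl (Category.id_comp h) rfl _
  map_comp {b b' b''} h k := by
    refine ConcreteCategory.hom_ext _ _ fun x => ?_
    apply PiElt.ext'
    · show X.map (h ≫ k) x.base = X.map k (X.map h x.base)
      simp
    · intro c h' v hv hv'
      exact PiElt.sec_congr (x := x) (y := x) rfl (Category.assoc h k h') rfl _

/-- The structure map of the pushforward presheaf. -/
def pHom : PiObj f V ⟶ X where
  app b := TypeCat.ofHom fun x => x.base
  naturality b b' h := rfl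

/-- The pushforward, as an object of `Over X`. -/
def Pi0 : Over X := Over.mk (pHom f V)

end Pi

section Equivy

variable {X Y : Aᵒᵖ ⥤ Type u} (f : Y ⟶ X)

lemma over_w_app {P Q : Over Y} (k : P ⟶ Q) (c : Aᵒᵖ) (q : P.left.obj c) :
    Q.hom.app c (k.left.app c q) = P.hom.app c q :=
  types_congr_hom (NatTrans.congr_app (Over.w k) c) q

/-- Forward direction: from a map over `Y` out of the pullback to a map into the pushforward. -/
noncomputable def toPi (W : Over X) (V : Over Y) (k : (Over.pullback f).obj W ⟶ V) :
    W.left ⟶ PiObj f V where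
  app b := TypeCat.ofHom fun w =>
    { base := W.hom.app b w
      sec := fun c h v hv => k.left.app c (pbPair W.hom f (W.left.map h w) v
          ((FunctorToTypes.naturality W.hom h w).trans hv.symm))
      overEq := fun c h v hv =>
        (over_w_app k c _).trans (pbPair_snd W.hom f _ _ _)
      natur := fun c c' h hk v hv => by
        refine ((FunctorToTypes.naturality k.left hk _).symm).trans ?_
        refine (congrArg (k.left.app c') (pb_map W.hom f hk _ _ _)).trans ?_
        exact congrArg (k.left.app c')
          (pbPair_congr W.hom f (FunctorToTypes.map_comp_apply W.left h hk w).symm rfl _) }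
  naturality b b' hb := by
    refine ConcreteCategory.hom_ext _ _ fun w => ?_
    apply PiElt.ext'
    · exact FunctorToTypes.naturality W.hom hb w
    · intro c h v hv hv'
      exact congrArg (k.left.app c)
        (pbPair_congr W.hom f (FunctorToTypes.map_comp_apply W.left hb h w).symm rfl _)

/-- Backward direction. -/
noncomputable def fromPi (W : Over X) (V : Over Y) (t : W ⟶ Pi0 f V) :
    pullback W.hom f ⟶ V.left where
  app c := TypeCat.ofHom fun q => (t.left.app c ((pullback.fst W.hom f).app c q)).sec c (𝟙 c)
      ((pullback.snd W.hom f).app c q)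
      (by
        rw [FunctorToTypes.map_id_apply]
        refine ((types_congr_hom (NatTrans.congr_app (pullback.condition (f := W.hom) (g := f)) c) q
          : W.hom.app c ((pullback.fst W.hom f).app c q)
            = f.app c ((pullback.snd W.hom f).app c q))).symm.trans ?_
        exact (over_w_app t c ((pullback.fst W.hom f).app c q)).symm)
  naturality c c' hk := by
    refine ConcreteCategory.hom_ext _ _ fun q => ?_
    refine (PiElt.sec_congr (f := f) (V := V)
      ((congrArg (t.left.app c')
          (FunctorToTypes.naturality (pullback.fst W.hom f) hk q)).trans
        (FunctorToTypes.naturality t.left hk _))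
      (rfl : 𝟙 c' = 𝟙 c') rfl _).trans ?_
    refine (PiElt.sec_congr (x := t.left.app c ((pullback.fst W.hom f).app c q))
      (y := t.left.app c ((pullback.fst W.hom f).app c q))
      rfl (show hk ≫ 𝟙 c' = 𝟙 c ≫ hk by simp)
      (FunctorToTypes.naturality (pullback.snd W.hom f) hk q) _).trans ?_
    exact ((t.left.app c ((pullback.fst W.hom f).app c q)).natur _ _ _ _ _ _).symm

/-- The core hom-set equivalence of the adjunction. -/
noncomputable def coreEquiv (W : Over X) (V : Over Y) :
    ((Over.pullback f).obj W ⟶ V) ≃ (W ⟶ Pi0 f V) where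
  toFun k := Over.homMk (toPi f W V k) (by
    apply NatTrans.ext
    funext b
    exact ConcreteCategory.hom_ext _ _ fun w => rfl)
  invFun t := Over.homMk (fromPi f W V t) (by
    apply NatTrans.ext
    funext c
    refine ConcreteCategory.hom_ext _ _ fun q => ?_
    exact (t.left.app c ((pullback.fst W.hom f).app c q)).overEq _ _ _ _)
  left_inv k := by
    apply Over.OverMorphism.ext
    apply NatTrans.ext
    funext c
    refine ConcreteCategory.hom_ext _ _ fun q => ?_
    refine (congrArg (k.left.app c)
      (pbPair_congr W.hom f (FunctorToTypes.map_id_apply _ _) rfl _)).trans ?_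
    refine congrArg (k.left.app c) (pb_ext W.hom f ?_ ?_)
    · exact pbPair_fst W.hom f _ _ _
    · exact pbPair_snd W.hom f _ _ _
  right_inv t := by
    apply Over.OverMorphism.ext
    apply NatTrans.ext
    funext b
    refine ConcreteCategory.hom_ext _ _ fun w => ?_
    apply PiElt.ext'
    · exact (over_w_app t b w).symm
    · intro c h v hv hv'
      refine (PiElt.sec_congr (f := f) (V := V)
        (congrArg (t.left.app c) (pbPair_fst W.hom f _ _ _))
        (rfl : 𝟙 c = 𝟙 c) (pbPair_snd W.hom f _ _ _) _).trans ?_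
      refine (PiElt.sec_congr (f := f) (V := V)
        (FunctorToTypes.naturality t.left h w)
        (rfl : 𝟙 c = 𝟙 c) rfl _).trans ?_
      exact PiElt.sec_congr (x := t.left.app b w) (y := t.left.app b w) rfl
        (Category.comp_id h) rfl _

lemma coreEquiv_natural {W' W : Over X} {V : Over Y} (h : W' ⟶ W)
    (k : (Over.pullback f).obj W ⟶ V) :
    coreEquiv f W' V ((Over.pullback f).map h ≫ k) = h ≫ coreEquiv f W V k := by
  apply Over.OverMorphism.ext
  apply NatTrans.ext
  funext b
  refine ConcreteCategory.hom_ext _ _ fun w' => ?_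
  apply PiElt.ext'
  · exact (over_w_app h b w').symm
  · intro c h' v hv hv'
    have hfst : ((Over.pullback f).map h).left ≫ pullback.fst W.hom f
        = pullback.fst W'.hom f ≫ h.left := by
      simp
      exact pullback.lift_fst _ _ _
    have hsnd : ((Over.pullback f).map h).left ≫ pullback.snd W.hom f
        = pullback.snd W'.hom f := by
      simp
      exact pullback.lift_snd _ _ _
    refine (congrArg (k.left.app c) (pb_ext W.hom f ?_ ?_)
      : k.left.app c (((Over.pullback f).map h).left.app c
          (pbPair W'.hom f (W'.left.map h' w') v _)) = _)
    · refine (types_congr_hom (NatTrans.congr_app hfst c) _).trans ?_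
      refine (congrArg (h.left.app c) (pbPair_fst W'.hom f _ _ _)).trans ?_
      refine (FunctorToTypes.naturality h.left h' w').trans ?_
      exact (pbPair_fst W.hom f _ _ _).symm
    · refine (types_congr_hom (NatTrans.congr_app hsnd c) _).trans ?_
      refine (pbPair_snd W'.hom f _ _ _).trans ?_
      exact (pbPair_snd W.hom f _ _ _).symm

/-- The pushforward functor `Π_f`. -/
noncomputable def PiFunctor : Over Y ⥤ Over X :=
  Adjunction.rightAdjointOfEquiv (F := Over.pullback f) (G_obj := Pi0 f) (coreEquiv f)
    (fun _ _ _ h k => coreEquiv_natural f h k)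

/-- The adjunction `Δ_f ⊣ Π_f`. -/
noncomputable def piAdj : Over.pullback f ⊣ PiFunctor f :=
  Adjunction.adjunctionOfEquivRight _ _

/-- Morphisms from a representable into the total object of `P : Over X` are the same as
pairs of a map `σ : y(a) ⟶ X` with a map over `X`. -/
def overHomEquiv (P : Over X) (a : A) :
    (yoneda.obj a ⟶ P.left) ≃ Σ σ : yoneda.obj a ⟶ X, (Over.mk σ ⟶ P) where
  toFun u := ⟨u ≫ P.hom, Over.homMk u rfl⟩
  invFun x := x.2.left
  left_inv u := rfl
  right_inv := by
    rintro ⟨σ, t⟩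
    obtain ⟨u, r, w⟩ := t
    change yoneda.obj a ⟶ P.left at u
    have w' : u ≫ P.hom = σ := by simpa using w
    subst w'
    exact congrArg (Sigma.mk (u ≫ P.hom)) (Over.OverMorphism.ext rfl)

/-- The formula for the pushforward, valid for any right adjoint to `Over.pullback f`. -/
noncomputable def formulaEquiv {Z : Aᵒᵖ ⥤ Type u} {Pi : Over Y ⥤ Over X}
    (adj : Over.pullback f ⊣ Pi) (g : Z ⟶ Y) (a : A) :
    ((Pi.obj (Over.mk g)).left.obj (op a)) ≃
      Σ σ : yoneda.obj a ⟶ X, (Over.mk (pullback.snd σ f) ⟶ Over.mk g) :=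
  yonedaEquiv.symm.trans ((overHomEquiv (Pi.obj (Over.mk g)) a).trans
    (Equiv.sigmaCongrRight fun σ => (adj.homEquiv (Over.mk σ) (Over.mk g)).symm))

end Equivy
end PiFormulaAux

open PiFormulaAux in
/-- In a presheaf category `Set^(Aᵒᵖ)`, for `g : Z ⟶ Y` and `f : Y ⟶ X`, the pushforward
`Π_f` (right adjoint to pullback along `f`) exists, and its value on `Z` at an object `a`
is isomorphic to the coproduct over `σ : y(a) ⟶ X` of the set of morphisms over `Y` from
the pullback of `Y` along `σ` to `Z`. -/
theorem presheaf_pi_formula {A : Type u} [SmallCategory A] {X Y Z : Aᵒᵖ ⥤ Type u}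
    (g : Z ⟶ Y) (f : Y ⟶ X) :
    ∃ (Pi : Over Y ⥤ Over X) (_ : Over.pullback f ⊣ Pi), ∀ a : A,
      Nonempty ((Pi.obj (Over.mk g)).left.obj (op a) ≃
        Σ σ : yoneda.obj a ⟶ X, (Over.mk (pullback.snd σ f) ⟶ Over.mk g)) := by
  exact ⟨PiFunctor f, piAdj f, fun a => ⟨formulaEquiv f (piAdj f) g a⟩⟩
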